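/- For every positive integer n, writing n = 2^ν · n' with n' odd, the cardinality of the quotient ring 𝔽₂[x][1/x, 1/(x+1)]/(x^n − 1) equals 2^{n − 2^ν}. -/

import Mathlib

open Polynomial

/-- If `p` is coprime to `q`, then `p` is a unit mod `q`. -/
lemma aux_isUnit_mk_of_isCoprime {R : Type*} [CommRing R] {p q : R}
    (h : IsCoprime p q) : IsUnit (Ideal.Quotient.mk (Ideal.span {q}) p) := by
  obtain ⟨a, b, hab⟩ := h
  apply IsUnit.of_mul_eq_one (Ideal.Quotient.mk _ a)
  have hq : Ideal.Quotient.mk (Ideal.span {q}) q = 0 :=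
    Ideal.Quotient.eq_zero_iff_mem.2 (Ideal.subset_span rfl)
  have h1 : (Ideal.Quotient.mk (Ideal.span {q})) (a * p + b * q) = 1 := by rw [hab]; simp
  rw [map_add, map_mul, map_mul, hq, mul_zero, add_zero, mul_comm] at h1
  exact h1

/-- If all elements of `M` become units mod `I`, the quotient of the localization at `M`
by the image of `I` is isomorphic to `R ⧸ I`. -/
noncomputable def aux_locQuotEquiv {R : Type*} [CommRing R] (M : Submonoid R) (I : Ideal R)
    (h : ∀ y : M, IsUnit (Ideal.Quotient.mk I (y : R))) :
    (Localization M ⧸ I.map (algebraMap R (Localization M))) ≃+* (R ⧸ I) := by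
  set φ : Localization M →+* R ⧸ I := IsLocalization.lift (M := M) h with hφ
  have hlift : ∀ r : R, φ (algebraMap R (Localization M) r) = Ideal.Quotient.mk I r :=
    fun r => IsLocalization.lift_eq h r
  have hsurj : Function.Surjective φ := by
    intro y
    obtain ⟨r, rfl⟩ := Ideal.Quotient.mk_surjective y
    exact ⟨algebraMap R (Localization M) r, hlift r⟩
  have hker : RingHom.ker φ = I.map (algebraMap R (Localization M)) := by
    apply le_antisymm
    · intro x hx
      obtain ⟨⟨r, s⟩, rfl⟩ := IsLocalization.mk'_surjective M x
      have hspec : IsLocalization.mk' (Localization M) r s * algebraMap R (Localization M) s =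
          algebraMap R (Localization M) r := IsLocalization.mk'_spec _ r s
      have hr : Ideal.Quotient.mk I r = 0 := by
        have := congrArg φ hspec
        rw [map_mul, hlift, hlift] at this
        rw [RingHom.mem_ker] at hx
        rw [hx, zero_mul] at this
        exact this.symm
      have hrI : r ∈ I := Ideal.Quotient.eq_zero_iff_mem.1 hr
      show IsLocalization.mk' (Localization M) r s ∈ _
      rw [IsLocalization.mk'_eq_mul_mk'_one]
      exact Ideal.mul_mem_right _ _ (Ideal.mem_map_of_mem _ hrI)
    · rw [Ideal.map_le_iff_le_comap]
      intro i hi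
      simp only [Ideal.mem_comap, RingHom.mem_ker, hlift]
      exact Ideal.Quotient.eq_zero_iff_mem.2 hi
  exact (Ideal.quotEquivOfEq hker.symm).trans (RingHom.quotientKerEquivOfSurjective hsurj)

theorem stmt_8 (n ν n' : ℕ) (hn : 0 < n) (hfac : n = 2 ^ ν * n') (hodd : Odd n') :
    Nat.card
        (Localization (Submonoid.closure {(X : (ZMod 2)[X]), X + 1}) ⧸
          Ideal.span
            {algebraMap (ZMod 2)[X]
                (Localization (Submonoid.closure {(X : (ZMod 2)[X]), X + 1}))
                (X ^ n - 1)}) = 2 ^ (n - 2 ^ ν) := by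
  classical
  have hn'pos : 0 < n' := hodd.pos
  obtain ⟨k, hk⟩ : ∃ k, n' = k + 1 := ⟨n' - 1, by omega⟩
  set M : Submonoid (ZMod 2)[X] := Submonoid.closure {(X : (ZMod 2)[X]), X + 1} with hM
  set g : (ZMod 2)[X] := ∑ i ∈ Finset.range n', X ^ i with hgdef
  -- char two facts
  have hsub : (X - 1 : (ZMod 2)[X]) = X + 1 := CharTwo.sub_eq_add _ _
  have hg : g * (X + 1) = X ^ n' - 1 := by
    rw [← hsub]; exact geom_sum_mul X n'
  -- factorization of X^n - 1
  have hpow : (X : (ZMod 2)[X]) ^ n - 1 = (X + 1) ^ 2 ^ ν * g ^ 2 ^ ν := by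
    have h1 : (X : (ZMod 2)[X]) ^ n = ((X : (ZMod 2)[X]) ^ n') ^ 2 ^ ν := by
      rw [← pow_mul, hfac, mul_comm]
    have h2 : ((X : (ZMod 2)[X]) ^ n' - 1) ^ 2 ^ ν =
        ((X : (ZMod 2)[X]) ^ n') ^ 2 ^ ν - 1 ^ 2 ^ ν := sub_pow_char_pow _ 1 ν
    rw [h1, ← one_pow (2 ^ ν), ← h2, one_pow, ← hg, mul_comm g, mul_pow]
  -- membership facts
  have hXmem : (X : (ZMod 2)[X]) ∈ M := Submonoid.subset_closure (by simp)
  have hX1mem : (X + 1 : (ZMod 2)[X]) ∈ M := Submonoid.subset_closure (by simp)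
  set S := Localization M with hS
  set q : (ZMod 2)[X] := g ^ 2 ^ ν with hqdef
  set I : Ideal (ZMod 2)[X] := Ideal.span {q} with hI
  -- span rewriting
  have hspan : Ideal.span {algebraMap (ZMod 2)[X] S (X ^ n - 1)} =
      I.map (algebraMap (ZMod 2)[X] S) := by
    rw [hpow, map_mul]
    rw [Ideal.span_singleton_mul_left_unit
      (IsLocalization.map_units S ⟨(X + 1) ^ 2 ^ ν, pow_mem hX1mem _⟩)]
    rw [hI, Ideal.map_span, Set.image_singleton]
  -- coprimality
  have hcopX : IsCoprime (X : (ZMod 2)[X]) g := by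
    have h0 : g.coeff 0 = 1 := by
      rw [coeff_zero_eq_eval_zero, hgdef, eval_geom_sum]
      rw [hk, Finset.sum_range_succ']
      simp
    refine ⟨-(divX g), 1, ?_⟩
    have h1 := X_mul_divX_add g
    rw [h0, map_one] at h1
    linear_combination -h1
  have hcopX1 : IsCoprime (X + 1 : (ZMod 2)[X]) g := by
    have hev : g.eval 1 = 1 := by
      rw [hgdef, eval_geom_sum]
      simp only [one_pow, Finset.sum_const, Finset.card_range, nsmul_eq_mul, mul_one]
      have : (n' : ZMod 2) = ((n' % 2 : ℕ) : ZMod 2) := (ZMod.natCast_mod n' 2).symm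
      rw [this, Nat.odd_iff.1 hodd]
      norm_num
    obtain ⟨c, hc⟩ : (X - C 1 : (ZMod 2)[X]) ∣ g - C (g.eval 1) := X_sub_C_dvd_sub_C_eval
    rw [hev, map_one, hsub] at hc
    refine ⟨-c, 1, ?_⟩
    linear_combination hc
  have hcopXq : IsCoprime (X : (ZMod 2)[X]) q := hcopX.pow_right
  have hcopX1q : IsCoprime (X + 1 : (ZMod 2)[X]) q := hcopX1.pow_right
  -- units in the quotient
  have hunits : ∀ y : M, IsUnit (Ideal.Quotient.mk I (y : (ZMod 2)[X])) := by
    rintro ⟨y, hy⟩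
    induction hy using Submonoid.closure_induction with
    | mem z hz =>
      rcases hz with rfl | rfl
      · exact aux_isUnit_mk_of_isCoprime hcopXq
      · exact aux_isUnit_mk_of_isCoprime hcopX1q
    | one => simp
    | mul a b _ _ ha hb => rw [map_mul]; exact ha.mul hb
  -- the equivalence
  have hcard1 : Nat.card (S ⧸ Ideal.span {algebraMap (ZMod 2)[X] S (X ^ n - 1)}) =
      Nat.card ((ZMod 2)[X] ⧸ I) := by
    rw [hspan]
    exact Nat.card_congr (aux_locQuotEquiv M I hunits).toEquiv
  rw [hcard1]
  -- degree computations
  have hgmonic : g.Monic := monic_geom_sum_X hn'pos.ne'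
  have hqmonic : q.Monic := hgmonic.pow _
  have hgdeg : g.natDegree = k := by
    have h1 : (g * (X + 1)).natDegree = n' := by
      rw [hg]
      have : ((X : (ZMod 2)[X]) ^ n' - 1) = X ^ n' - C 1 := by rw [map_one]
      rw [this, natDegree_X_pow_sub_C]
    have hX1monic : (X + 1 : (ZMod 2)[X]).Monic := by
      have := monic_X_add_C (1 : ZMod 2)
      rwa [map_one] at this
    have h2 : (g * (X + 1)).natDegree = g.natDegree + 1 := by
      rw [hgmonic.natDegree_mul hX1monic]
      congr 1
      have := natDegree_X_add_C (1 : ZMod 2)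
      rwa [map_one] at this
    omega
  have hqdeg : q.natDegree = n - 2 ^ ν := by
    rw [hqdef, natDegree_pow, hgdeg, hfac, hk]
    rw [mul_add, mul_one, Nat.add_sub_cancel]
  -- cardinality of the quotient by a monic polynomial
  have hq0 : q ≠ 0 := hqmonic.ne_zero
  show Nat.card (AdjoinRoot q) = 2 ^ (n - 2 ^ ν)
  have hdim : (AdjoinRoot.powerBasis hq0).dim = n - 2 ^ ν := by
    rw [AdjoinRoot.powerBasis_dim, hqdeg]
  rw [Nat.card_congr (AdjoinRoot.powerBasis hq0).basis.equivFun.toEquiv]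
  rw [Nat.card_eq_fintype_card, Fintype.card_fun, hdim]
  simp [ZMod.card]
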